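/- Let μ : [0,∞) → (0,∞) be non-increasing, not integrable, S(x) = ∫₀ˣ μ, and suppose x·μ(x)/S(x) ≥ k > 0 for all x > 0. Then for all λ ≥ 1 and x > 0, μ(x)/μ(λx) ≤ λ^{1−k}/k. -/

import Mathlib

open MeasureTheory Filter Set Topology

theorem stmt_11 (μ : ℝ → ℝ) (hpos : ∀ x ≥ 0, 0 < μ x)
    (hmono : AntitoneOn μ (Set.Ici 0))
    (hrc : ∀ x ≥ (0:ℝ), ContinuousWithinAt μ (Set.Ici x) x)
    (hnotint : ¬ IntegrableOn μ (Set.Ici 0))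
    (S : ℝ → ℝ) (hS : ∀ x, S x = ∫ y in (0:ℝ)..x, μ y)
    (k : ℝ) (hk : 0 < k) (hbound : ∀ x > 0, k ≤ x * μ x / S x) :
    ∀ l ≥ (1:ℝ), ∀ x > 0, μ x / μ (l * x) ≤ l ^ (1 - k) / k := by
  intro l hl x hx
  have hl0 : (0:ℝ) < l := lt_of_lt_of_le one_pos hl
  have hlx : 0 < l * x := mul_pos hl0 hx
  have hab : x ≤ l * x := le_mul_of_one_le_left hx.le hl
  -- interval integrability of μ on [0, b]
  have hII : ∀ b : ℝ, 0 ≤ b → IntervalIntegrable μ volume 0 b := by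
    intro b hb
    exact (hmono.mono (by rw [uIcc_of_le hb]; exact Icc_subset_Ici_self)).intervalIntegrable
  -- t * μ t ≤ S t
  have hxμS : ∀ t : ℝ, 0 ≤ t → t * μ t ≤ S t := by
    intro t ht
    rw [hS]
    calc t * μ t = ∫ _ in (0:ℝ)..t, μ t := by
          rw [intervalIntegral.integral_const, smul_eq_mul, sub_zero, mul_comm]
      _ ≤ ∫ y in (0:ℝ)..t, μ y := by
          apply intervalIntegral.integral_mono_on ht intervalIntegrable_const (hII t ht)
          intro y hy
          exact hmono hy.1 ht hy.2
  have hSpos : ∀ t : ℝ, 0 < t → 0 < S t := fun t ht =>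
    lt_of_lt_of_le (mul_pos ht (hpos t ht.le)) (hxμS t ht.le)
  have hkS : ∀ t : ℝ, 0 < t → k * S t ≤ t * μ t := by
    intro t ht
    have := hbound t ht
    rwa [le_div_iff₀ (hSpos t ht)] at this
  -- continuity of S
  have hScont : ContinuousOn S (Icc x (l * x)) := by
    have h1 : ContinuousOn (fun b => ∫ y in (0:ℝ)..b, μ y) (uIcc 0 (l * x)) :=
      intervalIntegral.continuousOn_primitive_interval' (hII _ hlx.le) left_mem_uIcc
    have h2 : ContinuousOn S (uIcc 0 (l * x)) := h1.congr fun t _ => hS t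
    exact h2.mono (by rw [uIcc_of_le hlx.le]; exact Icc_subset_Icc hx.le le_rfl)
  have hrpowcont : ContinuousOn (fun t : ℝ => t ^ (-k)) (Icc x (l * x)) := fun t ht =>
    (Real.continuousAt_rpow_const t (-k) (Or.inl (lt_of_lt_of_le hx ht.1).ne')).continuousWithinAt
  -- right derivative of S
  have hSderiv : ∀ t : ℝ, 0 ≤ t → HasDerivWithinAt S (μ t) (Ici t) t := by
    intro t ht
    have hmeas : StronglyMeasurableAtFilter μ (𝓝[>] t) volume := by
      refine ⟨Ioc t (t + 1), Ioc_mem_nhdsGT_of_mem ⟨le_rfl, lt_add_one t⟩, ?_⟩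
      exact (aemeasurable_restrict_of_antitoneOn measurableSet_Ioc
        (hmono.mono ((Ioc_subset_Icc_self.trans Icc_subset_Ici_self).trans
          (Ici_subset_Ici.mpr ht)))).aestronglyMeasurable
    have h := intervalIntegral.integral_hasDerivWithinAt_right (hII t ht)
      (s := Ici t) (t := Ioi t) hmeas ((hrc t ht).mono Ioi_subset_Ici_self)
    exact h.congr (fun y _ => hS y) (hS t)
  -- monotonicity of t ↦ S t * t ^ (-k)
  have key : ∀ ⦃t⦄, t ∈ Icc x (l * x) →
      -(S t * t ^ (-k)) ≤ -(S x * x ^ (-k)) := by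
    apply image_le_of_deriv_right_le_deriv_boundary
      (f := fun t => -(S t * t ^ (-k)))
      (f' := fun t => -(μ t * t ^ (-k) + S t * (-k * t ^ (-k - 1))))
      (B := fun _ => -(S x * x ^ (-k))) (B' := fun _ => 0)
    · exact (hScont.mul hrpowcont).neg
    · intro t ht
      have htpos : 0 < t := lt_of_lt_of_le hx ht.1
      have hrd : HasDerivWithinAt (fun t : ℝ => t ^ (-k)) (-k * t ^ (-k - 1)) (Ici t) t :=
        (Real.hasDerivAt_rpow_const (p := -k) (Or.inl htpos.ne')).hasDerivWithinAt
      exact ((hSderiv t htpos.le).mul hrd).neg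
    · exact le_rfl
    · exact continuousOn_const
    · exact fun t _ => hasDerivWithinAt_const t _ _
    · intro t ht
      have htpos : 0 < t := lt_of_lt_of_le hx ht.1
      have ht1 : t * t ^ (-k - 1) = t ^ (-k) := by
        nth_rewrite 1 [← Real.rpow_one t]
        rw [← Real.rpow_add htpos]
        ring_nf
      have h2 : (0:ℝ) ≤ t ^ (-k - 1) := (Real.rpow_pos_of_pos htpos _).le
      have h3 := mul_nonneg (sub_nonneg.2 (hkS t htpos)) h2
      have : 0 ≤ μ t * t ^ (-k) + S t * (-k * t ^ (-k - 1)) := by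
        rw [← ht1]; nlinarith [h3]
      linarith
  have gmono : S x * x ^ (-k) ≤ S (l * x) * (l * x) ^ (-k) :=
    neg_le_neg_iff.mp (key ⟨hab, le_rfl⟩)
  -- S (l*x) ≥ l ^ k * S x
  have hlk : (0:ℝ) < l ^ k := Real.rpow_pos_of_pos hl0 k
  have hxk : (0:ℝ) < x ^ (-k) := Real.rpow_pos_of_pos hx _
  have hSlx : l ^ k * S x ≤ S (l * x) := by
    have hsplit : (l * x) ^ (-k) = l ^ (-k) * x ^ (-k) := Real.mul_rpow hl0.le hx.le
    have hinv : l ^ (-k) = (l ^ k)⁻¹ := Real.rpow_neg hl0.le k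
    rw [hsplit, hinv] at gmono
    have := mul_le_mul_of_nonneg_right gmono (le_of_lt (inv_pos.2 hxk))
    rw [mul_assoc, mul_inv_cancel₀ hxk.ne', mul_one, mul_assoc, mul_assoc,
      mul_inv_cancel₀ hxk.ne', mul_one] at this
    calc l ^ k * S x ≤ l ^ k * (S (l * x) * (l ^ k)⁻¹) :=
          mul_le_mul_of_nonneg_left this hlk.le
      _ = S (l * x) := by field_simp
  -- bounds on μ x and μ (l * x)
  have hμx : μ x ≤ S x / x := (le_div_iff₀ hx).mpr (by linarith [hxμS x hx.le])
  have hμlx : k * l ^ k * S x / (l * x) ≤ μ (l * x) := by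
    rw [div_le_iff₀ hlx]
    calc k * l ^ k * S x = k * (l ^ k * S x) := by ring
      _ ≤ k * S (l * x) := mul_le_mul_of_nonneg_left hSlx hk.le
      _ ≤ (l * x) * μ (l * x) := hkS _ hlx
      _ = μ (l * x) * (l * x) := mul_comm _ _
  have hBpos : 0 < k * l ^ k * S x / (l * x) := by
    apply div_pos (mul_pos (mul_pos hk hlk) (hSpos x hx)) hlx
  have main : μ x / μ (l * x) ≤ (S x / x) / (k * l ^ k * S x / (l * x)) :=
    div_le_div₀ (div_pos (hSpos x hx) hx).le hμx hBpos hμlx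
  have hSxne : S x ≠ 0 := (hSpos x hx).ne'
  have hxne : x ≠ 0 := hx.ne'
  have hlkne : l ^ k ≠ 0 := hlk.ne'
  have hkne : k ≠ 0 := hk.ne'
  have heq : (S x / x) / (k * l ^ k * S x / (l * x)) = l ^ (1 - k) / k := by
    rw [Real.rpow_sub hl0, Real.rpow_one, div_div]
    field_simp
  rwa [heq] at main
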